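/- Let v ∈ V_{i,j} ≅ W ⊗ W satisfy L_{0,0}·v = L_{1,0}·v = L_{2,0}·v = 0, where the elements L_{α,0} span the subalgebra W of the generalized loop Witt algebra. Then v = 0. -/

import Mathlib

open Finsupp TensorProduct

/-- Bracket of the generalized Witt algebra `[L_α, L_β] = (β−α)L_{α+β}`. -/
noncomputable def bkW {F : Type*} [Field F] (Γ : AddSubgroup F) :
    (Γ →₀ F) →ₗ[F] (Γ →₀ F) →ₗ[F] (Γ →₀ F) :=
  Finsupp.lsum F fun α => LinearMap.toSpanSingleton F _
    (Finsupp.lsum F fun β =>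
      (((β : F) - (α : F)) • Finsupp.lsingle (α + β) : F →ₗ[F] _))

/-- Diagonal adjoint action of `W` on `W ⊗ W`. -/
noncomputable def actW {F : Type*} [Field F] (Γ : AddSubgroup F) (x : Γ →₀ F) :
    ((Γ →₀ F) ⊗[F] (Γ →₀ F)) →ₗ[F] ((Γ →₀ F) ⊗[F] (Γ →₀ F)) :=
  LinearMap.rTensor _ (bkW Γ x) + LinearMap.lTensor _ (bkW Γ x)

noncomputable instance instZeroTensorW {F : Type*} [Field F] (Γ : AddSubgroup F) :
    Zero ((Γ →₀ F) ⊗[F] (Γ →₀ F)) :=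
  ⟨(inferInstance : AddCommMonoid ((Γ →₀ F) ⊗[F] (Γ →₀ F))).zero⟩

lemma bkW_single {F : Type*} [Field F] (Γ : AddSubgroup F) (μ a : Γ) (c : F) :
    bkW Γ (Finsupp.single μ 1) (Finsupp.single a c)
      = Finsupp.single (μ + a) (((a : F) - μ) * c) := by
  simp [bkW, Finsupp.lsum_single, LinearMap.toSpanSingleton_apply, Finsupp.smul_single,
    smul_eq_mul]


noncomputable def coefT {F : Type*} [Field F] (Γ : AddSubgroup F) (γ δ : Γ) :
    ((Γ →₀ F) ⊗[F] (Γ →₀ F)) →ₗ[F] F :=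
  (Finsupp.lapply (γ, δ)).comp (finsuppTensorFinsupp' F Γ Γ).toLinearMap

lemma coefT_apply {F : Type*} [Field F] (Γ : AddSubgroup F) (γ δ : Γ)
    (v : (Γ →₀ F) ⊗[F] (Γ →₀ F)) :
    coefT Γ γ δ v = finsuppTensorFinsupp' F Γ Γ v (γ, δ) := rfl

lemma coef_act {F : Type*} [Field F] (Γ : AddSubgroup F) (μ γ δ : Γ) :
    (coefT Γ γ δ).comp (actW Γ (Finsupp.single μ 1))
      = ((γ : F) - 2 * μ) • coefT Γ (γ - μ) δ + ((δ : F) - 2 * μ) • coefT Γ γ (δ - μ) := by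
  ext a b
  simp only [LinearMap.comp_apply, actW, LinearMap.add_apply, LinearMap.smul_apply,
    AlgebraTensorModule.curry_apply, TensorProduct.curry_apply, LinearMap.coe_restrictScalars,
    LinearMap.rTensor_tmul, LinearMap.lTensor_tmul, bkW_single, map_add, coefT_apply,
    finsuppTensorFinsupp'_apply_apply, smul_eq_mul, Finsupp.lsingle_apply, bkW_single,
    mul_one, Finsupp.single_apply]
  have c1 : (μ + a = γ) ↔ ((a : F) = (γ : F) - (μ : F)) := by
    rw [← Subtype.coe_inj]; push_cast; rw [eq_comm, eq_sub_iff_add_eq, add_comm]; exact eq_comm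
  have c2 : (μ + b = δ) ↔ ((b : F) = (δ : F) - (μ : F)) := by
    rw [← Subtype.coe_inj]; push_cast; rw [eq_comm, eq_sub_iff_add_eq, add_comm]; exact eq_comm
  have c3 : (γ - μ = a) ↔ ((a : F) = (γ : F) - (μ : F)) := by
    rw [← Subtype.coe_inj]; push_cast; rw [eq_comm]
  have c4 : (δ - μ = b) ↔ ((b : F) = (δ : F) - (μ : F)) := by
    rw [← Subtype.coe_inj]; push_cast; rw [eq_comm]
  have c5 : (a = γ) ↔ ((a : F) = (γ : F)) := Subtype.coe_inj.symm
  have c6 : (b = δ) ↔ ((b : F) = (δ : F)) := Subtype.coe_inj.symm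
  have c7 : (γ = a) ↔ ((a : F) = (γ : F)) := by rw [eq_comm]; exact Subtype.coe_inj.symm
  have c8 : (δ = b) ↔ ((b : F) = (δ : F)) := by rw [eq_comm]; exact Subtype.coe_inj.symm
  classical
  simp only [Finsupp.single_apply]
  have c3' : (a = γ - μ) ↔ ((a : F) = (γ : F) - (μ : F)) := by
    rw [← Subtype.coe_inj]; push_cast; rfl
  have c4' : (b = δ - μ) ↔ ((b : F) = (δ : F) - (μ : F)) := by
    rw [← Subtype.coe_inj]; push_cast; rfl
  simp only [c1, c2, c3, c4, c5, c6, c7, c8, c3', c4']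
  have t1 : (if (a:F) = (γ:F) - μ then ((a:F) - μ) else 0)
      = (if (a:F) = (γ:F) - μ then ((γ:F) - 2*μ) else 0) := by
    split_ifs with h
    · rw [h]; ring
    · rfl
  have t2 : (if (b:F) = (δ:F) - μ then ((b:F) - μ) else 0)
      = (if (b:F) = (δ:F) - μ then ((δ:F) - 2*μ) else 0) := by
    split_ifs with h
    · rw [h]; ring
    · rfl
  rw [t1, t2]
  split_ifs <;> ring

/-- if `v ∈ W ⊗ W` is annihilated by `L_0`, `L_1` and `L_2` under the
diagonal adjoint action, then `v = 0`. -/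
theorem annihilated_by_L0_L1_L2_eq_zero
    {F : Type*} [Field F] [CharZero F] (Γ : AddSubgroup F) (h1 : (1 : F) ∈ Γ)
    (v : (Γ →₀ F) ⊗[F] (Γ →₀ F))
    (h0 : actW Γ (Finsupp.single (0 : Γ) (1 : F)) v = 0)
    (hone : actW Γ (Finsupp.single (⟨1, h1⟩ : Γ) (1 : F)) v = 0)
    (htwo : actW Γ (Finsupp.single ((⟨1, h1⟩ : Γ) + ⟨1, h1⟩) (1 : F)) v = 0) :
    v = 0 := by
  classical
  set o : Γ := ⟨1, h1⟩ with ho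
  have key : ∀ μ γ δ : Γ, actW Γ (Finsupp.single μ 1) v = 0 →
      ((γ : F) - 2 * μ) * coefT Γ (γ - μ) δ v + ((δ : F) - 2 * μ) * coefT Γ γ (δ - μ) v = 0 := by
    intro μ γ δ h
    have h' := congrArg (coefT Γ γ δ) h
    rw [← LinearMap.comp_apply, coef_act] at h'
    simpa using h'
  have E0 : ∀ γ δ : Γ, ((γ : F) + (δ : F)) * coefT Γ γ δ v = 0 := by
    intro γ δ
    have h' := key 0 γ δ h0
    simp only [ZeroMemClass.coe_zero, mul_zero, sub_zero] at h'
    linear_combination h'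
  have E1 : ∀ γ δ : Γ, ((γ : F) - 2) * coefT Γ (γ - o) δ v
      + ((δ : F) - 2) * coefT Γ γ (δ - o) v = 0 := by
    intro γ δ
    have h' := key o γ δ hone
    have : (o : F) = 1 := rfl
    rw [this] at h'
    linear_combination h'
  have E2 : ∀ γ δ : Γ, ((γ : F) - 4) * coefT Γ (γ - (o + o)) δ v
      + ((δ : F) - 4) * coefT Γ γ (δ - (o + o)) v = 0 := by
    intro γ δ
    have h' := key (o + o) γ δ htwo
    have hco : ((o + o : Γ) : F) = 2 := by push_cast [ho]; norm_num
    rw [hco] at h'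
    linear_combination h'
  have R1 : ∀ α : Γ, ((α : F) - 1) * coefT Γ α (-α) v
      = ((α : F) + 2) * coefT Γ (α + o) (-(α + o)) v := by
    intro α
    have h' := E1 (α + o) (-α)
    have e1 : α + o - o = α := add_sub_cancel_right α o
    have e2 : -α - o = -(α + o) := by abel
    rw [e1, e2] at h'
    have hca : ((α + o : Γ) : F) = (α : F) + 1 := by push_cast [ho]; ring
    have hcn : ((-α : Γ) : F) = -(α : F) := by push_cast; ring
    rw [hca, hcn] at h'
    linear_combination h'
  have R2 : ∀ α : Γ, ((α : F) - 2) * coefT Γ α (-α) v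
      = ((α : F) + 4) * coefT Γ (α + (o + o)) (-(α + (o + o))) v := by
    intro α
    have h' := E2 (α + (o + o)) (-α)
    have e1 : α + (o + o) - (o + o) = α := add_sub_cancel_right α (o + o)
    have e2 : -α - (o + o) = -(α + (o + o)) := by abel
    rw [e1, e2] at h'
    have hca : ((α + (o + o) : Γ) : F) = (α : F) + 2 := by push_cast [ho]; ring
    have hcn : ((-α : Γ) : F) = -(α : F) := by push_cast; ring
    rw [hca, hcn] at h'
    linear_combination h'
  have hg : ∀ α : Γ, coefT Γ α (-α) v = 0 := by
    by_contra hc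
    push_neg at hc
    obtain ⟨α, hα⟩ := hc
    set S : Set ℕ := {n | coefT Γ (α + n • o) (-(α + n • o)) v ≠ 0} with hS
    have hfin : S.Finite := by
      apply Set.Finite.of_finite_image
        (f := fun n : ℕ => ((α + n • o : Γ), (-(α + n • o) : Γ)))
      · apply ((finsuppTensorFinsupp' F Γ Γ v).support.finite_toSet).subset
        rintro _ ⟨n, hn, rfl⟩
        exact Finsupp.mem_support_iff.mpr hn
      · intro m _ n _ hmn
        have h2 : α + (m : ℕ) • o = α + (n : ℕ) • o := (Prod.mk.injEq _ _ _ _ ▸ hmn).1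
        have h3 : ((α : F) + m) = ((α : F) + n) := by
          have := congrArg (fun x : Γ => (x : F)) h2
          push_cast [ho] at this
          simpa using this
        have : (m : F) = n := by linear_combination h3
        exact_mod_cast this
    have hne : S.Nonempty :=
      ⟨0, by simp only [hS, Set.mem_setOf_eq, zero_smul, add_zero]; exact hα⟩
    have hne' : hfin.toFinset.Nonempty := by rwa [Set.Finite.toFinset_nonempty]
    set n0 := hfin.toFinset.max' hne' with hn0
    have hmem : n0 ∈ S := hfin.mem_toFinset.mp (hfin.toFinset.max'_mem hne')
    set β : Γ := α + n0 • o with hβdef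
    have hβ : coefT Γ β (-β) v ≠ 0 := hmem
    have hnot : ∀ k : ℕ, n0 < k → coefT Γ (α + k • o) (-(α + k • o)) v = 0 := by
      intro k hk
      by_contra hzk
      have hkS : k ∈ S := hzk
      have := hfin.toFinset.le_max' k (hfin.mem_toFinset.mpr hkS)
      omega
    have hz1 : coefT Γ (β + o) (-(β + o)) v = 0 := by
      have e : β + o = α + (n0 + 1) • o := by
        rw [hβdef, succ_nsmul, add_assoc]
      rw [e]
      exact hnot (n0 + 1) (by omega)
    have hz2 : coefT Γ (β + (o + o)) (-(β + (o + o))) v = 0 := by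
      have e : β + (o + o) = α + (n0 + 2) • o := by
        rw [hβdef, add_nsmul, two_nsmul]; abel
      rw [e]
      exact hnot (n0 + 2) (by omega)
    have r1 := R1 β
    rw [hz1, mul_zero] at r1
    have r2 := R2 β
    rw [hz2, mul_zero] at r2
    have hb1 : (β : F) = 1 := by
      have := mul_eq_zero.mp r1
      rcases this with h | h
      · exact sub_eq_zero.mp h
      · exact absurd h hβ
    have hb2 : (β : F) = 2 := by
      have := mul_eq_zero.mp r2
      rcases this with h | h
      · exact sub_eq_zero.mp h
      · exact absurd h hβ
    rw [hb1] at hb2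
    norm_num at hb2
  have hf : finsuppTensorFinsupp' F Γ Γ v = 0 := by
    ext p
    obtain ⟨γ, δ⟩ := p
    rw [Finsupp.coe_zero, Pi.zero_apply]
    show coefT Γ γ δ v = 0
    by_cases hsum : (γ : F) + (δ : F) = 0
    · have hδ : δ = -γ := by
        apply Subtype.ext
        push_cast
        linear_combination hsum
      rw [hδ]
      exact hg γ
    · rcases mul_eq_zero.mp (E0 γ δ) with h | h
      · exact absurd h hsum
      · exact h
  exact (LinearEquiv.map_eq_zero_iff _).mp hf
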